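/- Conditional sub-additivity of monotone complexity: there is a constant c such that for all x, y ∈ S∪Ω, Km²(x,y) ≤ Km(x|y) + Km(y) + c. -/

import Mathlib

open MeasureTheory Filter Set
open scoped ENNReal NNReal

namespace AlgRand

/-- `S` : finite binary strings. -/
abbrev S : Type := List Bool

/-- `Seq` : infinite binary sequences (the space Ω). -/
abbrev Seq : Type := ℕ → Bool

/-- A finite string is a prefix of an infinite sequence. -/
def PrefixSeq (x : S) (ω : Seq) : Prop := ∀ i : Fin x.length, x.get i = ω i

/-- The first `n` bits of an infinite sequence. -/
def seqTake (ω : Seq) (n : ℕ) : S := List.ofFn fun i : Fin n => ω i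

/-- Cylinder set Δ(x) ⊆ Ω. -/
def cyl (x : S) : Set Seq := {ω | PrefixSeq x ω}

/-- Product cylinder Δ(x,y) ⊆ Ω². -/
def cyl2 (xy : S × S) : Set (Seq × Seq) := cyl xy.1 ×ˢ cyl xy.2

/-- Prefix (partial order) on S². -/
def Pre2 (a b : S × S) : Prop := a.1 <+: b.1 ∧ a.2 <+: b.2

/-- A pair of strings is a (strict) prefix of a pair of sequences. -/
def Pre2Seq (a : S × S) (ω : Seq × Seq) : Prop := PrefixSeq a.1 ω.1 ∧ PrefixSeq a.2 ω.2

/-- Recursively enumerable subset of a primcodable type. -/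
def RESet {β : Type} [Primcodable β] (A : Set β) : Prop :=
  ∃ f : ℕ → Option β, Computable f ∧ A = {a | ∃ n, f n = some a}

/-- A computable probability measure on Ω. -/
def ComputableProb (P : Measure Seq) : Prop :=
  IsProbabilityMeasure P ∧
    ∃ p : S × ℕ → ℚ, Computable p ∧
      ∀ (x : S) (k : ℕ), 0 < k → |(P (cyl x)).toReal - (p (x, k) : ℝ)| < 1 / k

/-- A computable probability measure on Ω². -/
def ComputableProb2 (P : Measure (Seq × Seq)) : Prop :=
  IsProbabilityMeasure P ∧
    ∃ p : (S × S) × ℕ → ℚ, Computable p ∧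
      ∀ (xy : S × S) (k : ℕ), 0 < k → |(P (cyl2 xy)).toReal - (p (xy, k) : ℝ)| < 1 / k

/-- Ũ_n, the open set covered by the n-th level of a test. -/
def testUnion {α β : Type} (C : β → Set α) (U : Set (ℕ × β)) (n : ℕ) : Set α :=
  ⋃ x ∈ {x | (n, x) ∈ U}, C x

/-- Martin-Löf test w.r.t. a measure, generic in the cylinder function `C`. -/
def IsMLTest {α β : Type} [MeasurableSpace α] [Primcodable β]
    (C : β → Set α) (P : Measure α) (U : Set (ℕ × β)) : Prop :=
  RESet U ∧ (∀ n, testUnion C U (n + 1) ⊆ testUnion C U n) ∧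
    ∀ n, P (testUnion C U n) < (2⁻¹ : ℝ≥0∞) ^ n

/-- Martin-Löf randomness: ω avoids the limit of every test. -/
def MLRandom {α β : Type} [MeasurableSpace α] [Primcodable β]
    (C : β → Set α) (P : Measure α) (ω : α) : Prop :=
  ∀ U, IsMLTest C P U → ω ∉ ⋂ n, testUnion C U n

/-- ω ∈ R^P, for P on Ω. -/
abbrev Random1 (P : Measure Seq) (ω : Seq) : Prop := MLRandom cyl P ω

/-- ω ∈ R^P, for P on Ω². -/
abbrev Random2 (P : Measure (Seq × Seq)) (ω : Seq × Seq) : Prop := MLRandom cyl2 P ω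

/-- Marginal distribution P_X on the first coordinate. -/
noncomputable def margX (P : Measure (Seq × Seq)) : Measure Seq := P.map Prod.fst

/-- Marginal distribution P_Y on the second coordinate. -/
noncomputable def margY (P : Measure (Seq × Seq)) : Measure Seq := P.map Prod.snd

/-- Conditional probability P(x|y) = P(x,y)/P_Y(y), with value 0 when P_Y(y) = 0. -/
noncomputable def condP (P : Measure (Seq × Seq)) (x y : S) : ℝ :=
  (P (cyl2 (x, y))).toReal / (P (Set.univ ×ˢ cyl y)).toReal

/-- P(x|yinf) := lim_{y → yinf} P(x|y) along prefixes of yinf (junk value if no limit). -/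
noncomputable def condPLim (P : Measure (Seq × Seq)) (x : S) (yinf : Seq) : ℝ :=
  limUnder atTop fun m => condP P x (seqTake yinf m)

/-- Conditional probability P(y|x) = P(x,y)/P_X(x), with value 0 when P_X(x) = 0. -/
noncomputable def condX (P : Measure (Seq × Seq)) (y x : S) : ℝ :=
  (P (cyl2 (x, y))).toReal / (P (cyl x ×ˢ Set.univ)).toReal

/-- P(y|xinf) := lim_{x → xinf} P(y|x) along prefixes of xinf (junk value if no limit). -/
noncomputable def condXLim (P : Measure (Seq × Seq)) (y : S) (xinf : Seq) : ℝ :=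
  limUnder atTop fun m => condX P y (seqTake xinf m)

/-- The set S ∪ Ω of finite or infinite binary sequences. -/
inductive SW : Type where
  | fin : S → SW
  | inf : Seq → SW

/-- Prefix order ⊑ on S ∪ Ω. -/
def SW.le : SW → SW → Prop
  | .fin x, .fin y => x <+: y
  | .fin x, .inf ω => PrefixSeq x ω
  | .inf ω, .inf ω' => ω = ω'
  | .inf _, .fin _ => False

/-- (S ∪ Ω)². -/
abbrev SW2 : Type := SW × SW

/-- Componentwise prefix order ⊑ on (S ∪ Ω)². -/
def SW2.le (a b : SW2) : Prop := SW.le a.1 b.1 ∧ SW.le a.2 b.2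

/-- Length |x| ∈ ℕ∞ of an element of S ∪ Ω. -/
def SW.len : SW → ℕ∞
  | .fin x => (x.length : ℕ∞)
  | .inf _ => ⊤

/-- |p| = |p₁| + |p₂| for p ∈ (S ∪ Ω)². -/
def SW2.len (a : SW2) : ℕ∞ := SW.len a.1 + SW.len a.2

/-- Δ(x) for x ∈ S ∪ Ω. -/
def SW.cylW : SW → Set Seq
  | .fin x => cyl x
  | .inf ω => {ω}

/-- Δ(x,y) for (x,y) ∈ (S ∪ Ω)². -/
def SW2.cylW (a : SW2) : Set (Seq × Seq) := SW.cylW a.1 ×ˢ SW.cylW a.2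

/-- Embedding S → S ∪ Ω. -/
def emb1 (x : S) : SW := SW.fin x

/-- Embedding S² → (S ∪ Ω)². -/
def emb2 (p : S × S) : SW2 := (SW.fin p.1, SW.fin p.2)

/-- Embedding Ω² → (S ∪ Ω)². -/
def inf2 (ω : Seq × Seq) : SW2 := (SW.inf ω.1, SW.inf ω.2)

/-- Least upper bound with respect to a relation. -/
def IsSupRel {V : Type} (le : V → V → Prop) (A : Set V) (s : V) : Prop :=
  (∀ a ∈ A, le a s) ∧ ∀ b, (∀ a ∈ A, le a b) → le s b

/-- `f` is a computable monotone function defined by an r.e. set `F` satisfying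
condition (3) of the paper:  (λ,λ) ∈ F_p and ⋁_{p'⊑p} F_{p'} exists for every p,
and f(q) = ⋁ {x : ∃ p' ⊑ q, (p',x) ∈ F}. -/
def CompMono {D E : Type} {W V : Type} [Primcodable D] [Primcodable E]
    (embD : D → W) (leW : W → W → Prop) (embE : E → V) (leV : V → V → Prop)
    (eps : E) (f : W → V) : Prop :=
  ∃ F : Set (D × E), RESet F ∧
    (∀ p : D, (p, eps) ∈ F ∧
        ∃ s, IsSupRel leV (embE '' {x | ∃ p' : D, leW (embD p') (embD p) ∧ (p', x) ∈ F}) s) ∧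
    ∀ q : W, IsSupRel leV (embE '' {x | ∃ p' : D, leW (embD p') q ∧ (p', x) ∈ F}) (f q)

/-- Computable monotone function (S ∪ Ω)² → (S ∪ Ω)². -/
def CompMono22 (f : SW2 → SW2) : Prop := CompMono emb2 SW2.le emb2 SW2.le (([], []) : S × S) f

/-- Computable monotone function S ∪ Ω → (S ∪ Ω)². -/
def CompMono12 (g : SW → SW2) : Prop := CompMono emb1 SW.le emb2 SW2.le (([], []) : S × S) g

/-- Computable monotone function (S ∪ Ω)² → S ∪ Ω. -/
def CompMono21 (e : SW2 → SW) : Prop := CompMono emb2 SW2.le emb1 SW.le ([] : S) e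

/-- Computable monotone function S ∪ Ω → S ∪ Ω. -/
def CompMono11 (ρ : SW → SW) : Prop := CompMono emb1 SW.le emb1 SW.le ([] : S) ρ

/-- Km²_f(x) := min{|p₁|+|p₂| : x ⊑ f(p₁,p₂)} ∈ ℕ∞. -/
noncomputable def Km2 (f : SW2 → SW2) (x : SW2) : ℕ∞ :=
  ⨅ (p : SW2) (_ : SW2.le x (f p)), SW2.len p

/-- Km_f(x) := min{|p| : x ⊑ f(p,λ)} ∈ ℕ∞. -/
noncomputable def Km1 (f : SW2 → SW2) (x : SW2) : ℕ∞ :=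
  ⨅ (p : SW) (_ : SW2.le x (f (p, SW.fin []))), SW.len p

/-- Km(x|y) := min{|p| : (x,λ) ⊑ u(p,y)} ∈ ℕ∞. -/
noncomputable def KmCond (u : SW2 → SW2) (x y : SW) : ℕ∞ :=
  ⨅ (p : SW) (_ : SW2.le (x, SW.fin []) (u (p, y))), SW.len p

/-- Km_g(x) := min{|p| : x ⊑ g(p)} for g : S ∪ Ω → (S ∪ Ω)². -/
noncomputable def KmOf12 (g : SW → SW2) (x : SW2) : ℕ∞ :=
  ⨅ (p : SW) (_ : SW2.le x (g p)), SW.len p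

/-- Optimality of a computable monotone function on (S ∪ Ω)². -/
def Optimal (u : SW2 → SW2) : Prop :=
  CompMono22 u ∧
    ∀ f : SW2 → SW2, CompMono22 f → ∃ c : ℕ, ∀ x : SW2, Km2 u x ≤ Km2 f x + (c : ℕ∞)

/-- 2^{-n} for n ∈ ℕ∞ (with 2^{-∞} = 0), as an extended nonnegative real. -/
noncomputable def tpow (n : ℕ∞) : ℝ≥0∞ := if n = ⊤ then 0 else (2⁻¹ : ℝ≥0∞) ^ n.toNat

/-- Non-overlapping subset of (S ∪ Ω)². -/
def NonOverlapW (A : Set SW2) : Prop := A.Pairwise fun a b => SW2.cylW a ∩ SW2.cylW b = ∅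

/-- Non-overlapping subset of S². -/
def NonOverlapF (A : Set (S × S)) : Prop := A.Pairwise fun a b => cyl2 a ∩ cyl2 b = ∅

/-- Condition (4): any two members of A are comparable or have disjoint cylinders. -/
def Cond4 (A : Set (S × S)) : Prop :=
  ∀ a ∈ A, ∀ b ∈ A, Pre2 a b ∨ Pre2 b a ∨ cyl2 a ∩ cyl2 b = ∅

/-- Condition (5): relative complements of cylinders are non-overlapping unions within A. -/
def Cond5 (A : Set (S × S)) : Prop :=
  ∀ a ∈ A, ∀ b ∈ A, ∃ α ⊆ A, NonOverlapF α ∧ cyl2 a ∩ (cyl2 b)ᶜ = ⋃ z ∈ α, cyl2 z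

/-- A(xinf) := {x ∈ A | x ⊏ xinf}. -/
def Asec (A : Set (S × S)) (ω : Seq × Seq) : Set (S × S) := {a ∈ A | Pre2Seq a ω}

/-- sup_{x ∈ A} (−log P(x) − K(x)) < ∞. -/
def KmBound (P : Measure (Seq × Seq)) (K : S × S → ℕ∞) (A : Set (S × S)) : Prop :=
  ∃ c : ℝ, ∀ x ∈ A, ∀ k : ℕ, K x = (k : ℕ∞) →
    0 < P (cyl2 x) ∧ -Real.logb 2 ((P (cyl2 x)).toReal) ≤ (k : ℝ) + c

/-- sup_{x ∈ A} |log P(x) + K(x)| < ∞. -/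
def KmBoundAbs (P : Measure (Seq × Seq)) (K : S × S → ℕ∞) (A : Set (S × S)) : Prop :=
  ∃ c : ℝ, ∀ x ∈ A, ∃ k : ℕ, K x = (k : ℕ∞) ∧ 0 < P (cyl2 x) ∧
    |Real.logb 2 ((P (cyl2 x)).toReal) + (k : ℝ)| ≤ c

/-- The conditional probability P(·|yinf) is computable relative to the oracle yinf:
there is a partial computable A(x,y,k), monotone in y, approximating P(x|yinf)
to within 1/k along prefixes y of yinf. -/
def CondComputableAt (P : Measure (Seq × Seq)) (yinf : Seq) : Prop :=
  ∃ A : (S × S) × ℕ →. ℚ, Partrec A ∧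
    (∀ (x y z : S) (k : ℕ) (q : ℚ), q ∈ A ((x, y), k) → y <+: z → q ∈ A ((x, z), k)) ∧
    ∀ (x : S) (k : ℕ), 0 < k → ∃ (m : ℕ) (q : ℚ), q ∈ A ((x, seqTake yinf m), k) ∧
      |condPLim P x yinf - (q : ℝ)| < 1 / k

/-- A Martin-Löf test w.r.t. Q which is r.e. relative to the oracle yinf. -/
def RelMLTest (Q : Measure Seq) (yinf : Seq) (U : ℕ → Set S) : Prop :=
  (∃ B : (ℕ × ℕ) × S →. S, Partrec B ∧
      (∀ (i n : ℕ) (y z x : S), x ∈ B ((i, n), y) → y <+: z → x ∈ B ((i, n), z)) ∧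
      ∀ n, U n = {x | ∃ i m, x ∈ B ((i, n), seqTake yinf m)}) ∧
  (∀ n, (⋃ x ∈ U (n + 1), cyl x) ⊆ ⋃ x ∈ U n, cyl x) ∧
  ∀ n, Q (⋃ x ∈ U n, cyl x) < (2⁻¹ : ℝ≥0∞) ^ n

/-- Martin-Löf randomness w.r.t. Q relative to the oracle yinf. -/
def RelMLRandom (Q : Measure Seq) (yinf xinf : Seq) : Prop :=
  ∀ U, RelMLTest Q yinf U → xinf ∉ ⋂ n, ⋃ x ∈ U n, cyl x

/-- Likelihood ratio r(x) = Q(x)/P(x), with value 0 when P(x) = 0. -/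
noncomputable def ratio (P Q : Measure Seq) (x : S) : ℝ :=
  (Q (cyl x)).toReal / (P (cyl x)).toReal

/-- P(·|yinf) f,(xinf,yinf)-effectively converges with rate g. -/
def EffConv (P : Measure (Seq × Seq)) (xinf yinf : Seq) (f : ℕ → ℚ) (g : ℕ → ℕ) : Prop :=
  Computable g ∧ Monotone g ∧
    ∀ x y : S, PrefixSeq x xinf → PrefixSeq y yinf → g x.length ≤ y.length →
      |condP P x y / condPLim P x yinf - 1| < (f x.length : ℝ)

/-- A_g(xinf,yinf) := {(x,y) : |y| = g(|x|), (x,y) ⊏ (xinf,yinf)}. -/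
def AgSec (g : ℕ → ℕ) (xinf yinf : Seq) : Set (S × S) :=
  {xy | xy.2.length = g xy.1.length ∧ PrefixSeq xy.1 xinf ∧ PrefixSeq xy.2 yinf}

/-- A uniformly computable family of probability measures on Ω. -/
def UnifComputableFam (Pn : ℕ → Measure Seq) : Prop :=
  (∀ n, IsProbabilityMeasure (Pn n)) ∧
    ∃ A : (ℕ × S) × ℕ → ℚ, Computable A ∧
      ∀ (n : ℕ) (x : S) (k : ℕ), 0 < k →
        |(A ((n, x), k) : ℝ) - ((Pn n) (cyl x)).toReal| < 1 / k

/-- A computable sequence of reals (e.g. a computable probability on ℕ). -/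
def ComputableRealSeq (α : ℕ → ℝ) : Prop :=
  ∃ a : ℕ × ℕ → ℚ, Computable a ∧ ∀ (n k : ℕ), 0 < k → |α n - (a (n, k) : ℝ)| < 1 / k

/-- The mixture Σ_n α(n) P_n. -/
noncomputable def mixture (α : ℕ → ℝ) (Pn : ℕ → Measure Seq) : Measure Seq :=
  Measure.sum fun n => ENNReal.ofReal (α n) • Pn n

/-- The conditional probability measure P(·|y) on Ω, for a finite string y. -/
noncomputable def condMeasGivenY (P : Measure (Seq × Seq)) (y : S) : Measure Seq :=
  (P (Set.univ ×ˢ cyl y))⁻¹ • ((P.restrict (Set.univ ×ˢ cyl y)).map Prod.fst)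

/-- The posterior distribution P_{Y|X}(·|x) on Ω, for a finite string x. -/
noncomputable def postMeas (P : Measure (Seq × Seq)) (x : S) : Measure Seq :=
  (P (cyl x ×ˢ Set.univ))⁻¹ • ((P.restrict (cyl x ×ˢ Set.univ)).map Prod.snd)
section AuxOrder

lemma SW_le_refl (a : SW) : SW.le a a := by
  cases a with
  | fin x => exact List.prefix_refl x
  | inf ω => rfl

lemma prefixSeq_of_prefix {x y : S} {ω : Seq} (h : x <+: y) (h2 : PrefixSeq y ω) :
    PrefixSeq x ω := by
  intro i
  have hi : (i : ℕ) < y.length := lt_of_lt_of_le i.isLt h.length_le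
  have := h2 ⟨i, hi⟩
  simp only [List.get_eq_getElem] at this ⊢
  rw [h.getElem i.isLt]
  exact this

lemma SW_le_trans {a b c : SW} (hab : SW.le a b) (hbc : SW.le b c) : SW.le a c := by
  cases a <;> cases b <;> cases c <;>
    simp only [SW.le] at * <;> first
      | exact hab.trans hbc
      | exact prefixSeq_of_prefix hab hbc
      | (subst hbc; exact hab)
      | (subst hab; exact hbc)
      | exact hab.elim
      | exact hbc.elim

lemma SW_le_nil (a : SW) : SW.le (SW.fin []) a := by
  cases a with
  | fin x => exact List.nil_prefix
  | inf ω => exact fun i => absurd i.isLt (by simp)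

lemma SW2_le_refl (a : SW2) : SW2.le a a := ⟨SW_le_refl _, SW_le_refl _⟩

lemma SW2_le_trans {a b c : SW2} (hab : SW2.le a b) (hbc : SW2.le b c) : SW2.le a c :=
  ⟨SW_le_trans hab.1 hbc.1, SW_le_trans hab.2 hbc.2⟩

/-- A list with pointwise-equal entries into a longer list is a prefix. -/
lemma prefix_of_getElem {y z : S} (hlen : y.length ≤ z.length)
    (h : ∀ i (hi : i < y.length), y[i] = z[i]'(lt_of_lt_of_le hi hlen)) : y <+: z := by
  rw [List.prefix_iff_eq_take]
  apply List.ext_getElem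
  · simp [Nat.min_eq_left hlen]
  · intro n h1 h2
    rw [List.getElem_take]
    exact h n h1

lemma prefixSeq_getElem {y : S} {ω : Seq} (h : PrefixSeq y ω) (i : ℕ) (hi : i < y.length) :
    y[i] = ω i := by
  have := h ⟨i, hi⟩
  simpa using this

/-- Two finite prefixes of the same element of S ∪ Ω are comparable (shorter one first). -/
lemma comparable_of_le {y' y : S} {w : SW} (h1 : SW.le (SW.fin y') w) (h2 : SW.le (SW.fin y) w)
    (hlen : y'.length ≤ y.length) : y' <+: y := by
  cases w with
  | fin m => exact List.prefix_of_prefix_length_le h1 h2 hlen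
  | inf ω =>
    apply prefix_of_getElem hlen
    intro i hi
    rw [prefixSeq_getElem h1 i hi, prefixSeq_getElem h2 i (lt_of_lt_of_le hi hlen)]

/-- The truncation of an element of S ∪ Ω to length n. -/
def SWtrunc : SW → ℕ → S
  | .fin x, n => x.take n
  | .inf ω, n => seqTake ω n

lemma le_trunc {y : S} {w : SW} (h : SW.le (SW.fin y) w) {n : ℕ} (hn : y.length ≤ n) :
    y <+: SWtrunc w n := by
  cases w with
  | fin m => exact List.prefix_take_iff.mpr ⟨h, hn⟩
  | inf ω =>
    have hlen : y.length ≤ (seqTake ω n).length := by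
      simpa [seqTake] using hn
    apply prefix_of_getElem hlen
    intro i hi
    rw [prefixSeq_getElem h i hi]
    simp [SWtrunc, seqTake]

/-- A least upper bound is dominated by upper bounds of larger sets. -/
lemma sup_le_sup {V : Type} {le : V → V → Prop} {A B : Set V} {s t : V}
    (hA : IsSupRel le A s) (hB : IsSupRel le B t) (hAB : A ⊆ B) : le s t :=
  hA.2 t fun a ha => hB.1 a (hAB ha)

/-- First projection of a sup of an embedded set of pairs. -/
lemma sup_fst {B : Set (S × S)} {s : SW2} (h : IsSupRel SW2.le (emb2 '' B) s) :
    IsSupRel SW.le (SW.fin '' (Prod.fst '' B)) s.1 := by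
  constructor
  · rintro a ⟨y, ⟨p, hp, rfl⟩, rfl⟩
    exact (h.1 (emb2 p) ⟨p, hp, rfl⟩).1
  · intro b hb
    have hub : ∀ a ∈ emb2 '' B, SW2.le a (b, s.2) := by
      rintro a ⟨p, hp, rfl⟩
      exact ⟨hb _ ⟨p.1, ⟨p, hp, rfl⟩, rfl⟩, (h.1 _ ⟨p, hp, rfl⟩).2⟩
    exact (h.2 (b, s.2) hub).1

/-- Second projection of a sup of an embedded set of pairs. -/
lemma sup_snd {B : Set (S × S)} {s : SW2} (h : IsSupRel SW2.le (emb2 '' B) s) :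
    IsSupRel SW.le (SW.fin '' (Prod.snd '' B)) s.2 := by
  constructor
  · rintro a ⟨y, ⟨p, hp, rfl⟩, rfl⟩
    exact (h.1 (emb2 p) ⟨p, hp, rfl⟩).2
  · intro b hb
    have hub : ∀ a ∈ emb2 '' B, SW2.le a (s.1, b) := by
      rintro a ⟨p, hp, rfl⟩
      exact ⟨(h.1 _ ⟨p, hp, rfl⟩).1, hb _ ⟨p.2, ⟨p, hp, rfl⟩, rfl⟩⟩
    exact (h.2 (s.1, b) hub).2

/-- Chain/attainment lemma: any finite prefix of the sup of a set of finite strings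
is a prefix of some member of the set. -/
lemma exists_ge_of_sup {Ys : Set S} {w : SW} (hsup : IsSupRel SW.le (SW.fin '' Ys) w)
    (hne : Ys.Nonempty) {y' : S} (hy' : SW.le (SW.fin y') w) : ∃ y ∈ Ys, y' <+: y := by
  by_cases hbig : ∃ y ∈ Ys, y'.length ≤ y.length
  · obtain ⟨y, hy, hlen⟩ := hbig
    exact ⟨y, hy, comparable_of_le hy' (hsup.1 _ ⟨y, hy, rfl⟩) hlen⟩
  · push_neg at hbig
    rcases Nat.eq_zero_or_pos y'.length with h0 | hpos
    · obtain ⟨y, hy⟩ := hne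
      exact ⟨y, hy, by rw [List.length_eq_zero_iff] at h0; subst h0; exact List.nil_prefix⟩
    exfalso
    set N := y'.length - 1 with hN
    have hub : ∀ a ∈ SW.fin '' Ys, SW.le a (SW.fin (SWtrunc w N)) := by
      rintro a ⟨y, hy, rfl⟩
      have hylen : y.length ≤ N := by
        have := hbig y hy
        omega
      exact le_trunc (hsup.1 _ ⟨y, hy, rfl⟩) hylen
    have hle := hsup.2 _ hub
    cases w with
    | inf ω => exact hle
    | fin m =>
      have h1 : m.length ≤ N := by
        have := hle.length_le
        cases m with
        | nil =>
          have h2 : y'.length ≤ 0 := by simpa using hy'.length_le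
          omega
        | cons a l => simpa [SWtrunc] using this
      have h2 : y'.length ≤ m.length := hy'.length_le
      omega

end AuxOrder
section AuxRE

/-- Pairs of pairs of strings. -/
abbrev ZZ : Type := (S × S) × (S × S)

def reStep (z₁ z₂ : ZZ) (r : S) : Option ZZ :=
  if z₁.1.2 = ([] : S) ∧ z₂.1.2 ++ r = z₁.2.1 then
    some ((z₂.1.1, z₁.1.1), (z₂.2.1, z₁.2.1)) else none
def reG₂ (q : (ℕ × ZZ) × ZZ) : Option ZZ :=
  (Encodable.decode q.1.1.unpair.2.unpair.2 : Option S).bind fun r => reStep q.1.2 q.2 r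
def reG₁ (e : ℕ → Option ZZ) (p : ℕ × ZZ) : Option ZZ :=
  (e p.1.unpair.2.unpair.1).bind fun z₂ => reG₂ ((p.1, p.2), z₂)
def reEnum (e : ℕ → Option ZZ) (n : ℕ) : Option ZZ :=
  (e n.unpair.1).bind fun z₁ => reG₁ e (n, z₁)

lemma primrec_reStep :
    Primrec fun a : ((ℕ × ZZ) × ZZ) × S => reStep a.1.1.2 a.1.2 a.2 := by
  have pz₁ : Primrec fun a : ((ℕ × ZZ) × ZZ) × S => a.1.1.2 :=
    Primrec.snd.comp (Primrec.fst.comp Primrec.fst)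
  have pz₂ : Primrec fun a : ((ℕ × ZZ) × ZZ) × S => a.1.2 :=
    Primrec.snd.comp Primrec.fst
  have pr : Primrec fun a : ((ℕ × ZZ) × ZZ) × S => a.2 := Primrec.snd
  unfold reStep
  apply Primrec.ite
  · apply PrimrecPred.and
    · exact Primrec.eq.comp (Primrec.snd.comp (Primrec.fst.comp pz₁)) (Primrec.const [])
    · exact Primrec.eq.comp
        (Primrec.list_append.comp (Primrec.snd.comp (Primrec.fst.comp pz₂)) pr)
        (Primrec.fst.comp (Primrec.snd.comp pz₁))
  · exact Primrec.option_some.comp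
      (Primrec.pair
        (Primrec.pair (Primrec.fst.comp (Primrec.fst.comp pz₂))
          (Primrec.fst.comp (Primrec.fst.comp pz₁)))
        (Primrec.pair (Primrec.fst.comp (Primrec.snd.comp pz₂))
          (Primrec.fst.comp (Primrec.snd.comp pz₁))))
  · exact Primrec.const none

lemma computable_reG₂ : Computable reG₂ := by
  have h1 : Computable fun q : (ℕ × ZZ) × ZZ =>
      (Encodable.decode q.1.1.unpair.2.unpair.2 : Option S) :=
    Computable.decode.comp
      (Primrec.snd.comp (Primrec.unpair.comp (Primrec.snd.comp
        (Primrec.unpair.comp (Primrec.fst.comp Primrec.fst))))).to_comp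
  have h2 : Computable₂ fun (q : (ℕ × ZZ) × ZZ) (r : S) => reStep q.1.2 q.2 r := by
    delta Computable₂
    exact primrec_reStep.to_comp
  exact h1.option_bind h2

lemma computable_reG₁ {e : ℕ → Option ZZ} (he : Computable e) : Computable (reG₁ e) := by
  have h1 : Computable fun p : ℕ × ZZ => e p.1.unpair.2.unpair.1 :=
    he.comp (Primrec.fst.comp (Primrec.unpair.comp (Primrec.snd.comp
      (Primrec.unpair.comp Primrec.fst)))).to_comp
  have h2 : Computable₂ fun (p : ℕ × ZZ) (z₂ : ZZ) => reG₂ ((p.1, p.2), z₂) := by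
    delta Computable₂
    exact computable_reG₂.comp
      ((Primrec.pair (Primrec.pair (Primrec.fst.comp Primrec.fst)
        (Primrec.snd.comp Primrec.fst)) Primrec.snd)).to_comp
  exact h1.option_bind h2

lemma computable_reEnum {e : ℕ → Option ZZ} (he : Computable e) :
    Computable (reEnum e) := by
  have h1 : Computable fun n : ℕ => e n.unpair.1 :=
    he.comp (Primrec.fst.comp Primrec.unpair).to_comp
  have h2 : Computable₂ fun (n : ℕ) (z₁ : ZZ) => reG₁ e (n, z₁) := by
    delta Computable₂
    exact (computable_reG₁ he).comp
      (Primrec.pair Primrec.fst Primrec.snd).to_comp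
  exact h1.option_bind h2

/-- The r.e. set underlying the composed machine is r.e. -/
lemma RESet_comp {F : Set ((S × S) × (S × S))} (hre : RESet F) :
    RESet {z : (S × S) × (S × S) | (∃ t, ((z.1.2, []), (z.2.2, t)) ∈ F) ∧
      ∃ y' s, y' <+: z.2.2 ∧ ((z.1.1, y'), (z.2.1, s)) ∈ F} := by
  classical
  obtain ⟨e, hecomp, heeq⟩ := hre
  refine ⟨reEnum e, computable_reEnum hecomp, ?_⟩
  ext z
  simp only [Set.mem_setOf_eq]
  constructor
  · rintro ⟨⟨t, hby⟩, y', s, hy'y, hF'⟩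
    rw [heeq] at hby hF'
    obtain ⟨n₁, hn₁⟩ := hby
    obtain ⟨n₂, hn₂⟩ := hF'
    obtain ⟨r, hr⟩ := hy'y
    refine ⟨Nat.pair n₁ (Nat.pair n₂ (Encodable.encode r)), ?_⟩
    simp only [reEnum, reG₁, reG₂, reStep, Nat.unpair_pair, hn₁, hn₂,
      Encodable.encodek, Option.bind_some]
    simp [hr]
  · rintro ⟨n, hn⟩
    simp only [reEnum, reG₁, reG₂, reStep] at hn
    obtain ⟨⟨⟨b, c⟩, y, t⟩, h₁, hn⟩ := Option.bind_eq_some_iff.mp hn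
    obtain ⟨⟨⟨a, y'⟩, x, s⟩, h₂, hn⟩ := Option.bind_eq_some_iff.mp hn
    obtain ⟨r, h₃, hn⟩ := Option.bind_eq_some_iff.mp hn
    split_ifs at hn with hcond
    · obtain ⟨hc1, hc2⟩ := hcond
      simp only at hc1 hc2
      subst hc1
      obtain rfl : ((a, b), (x, y)) = z := Option.some_inj.mp hn
      have hm₁ : (((b, []), (y, t)) : (S × S) × (S × S)) ∈ F := heeq ▸ ⟨n.unpair.1, h₁⟩
      have hm₂ : (((a, y'), (x, s)) : (S × S) × (S × S)) ∈ F :=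
        heeq ▸ ⟨n.unpair.2.unpair.1, h₂⟩
      exact ⟨⟨t, hm₁⟩, y', s, ⟨r, hc2⟩, hm₂⟩

end AuxRE
section AuxComp

/-- The defining set of programs below `q`. -/
def secSet (F : Set ((S × S) × (S × S))) (q : SW2) : Set (S × S) :=
  {x | ∃ p' : S × S, SW2.le (emb2 p') q ∧ (p', x) ∈ F}

lemma mono_of_sups {u : SW2 → SW2} {F : Set ((S × S) × (S × S))}
    (h3 : ∀ q : SW2, IsSupRel SW2.le (emb2 '' secSet F q) (u q))
    {q q' : SW2} (hqq' : SW2.le q q') : SW2.le (u q) (u q') := by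
  apply sup_le_sup (h3 q) (h3 q')
  apply Set.image_mono
  rintro x ⟨p', hp', hF⟩
  exact ⟨p', SW2_le_trans hp' hqq', hF⟩

/-- The composition construction: from a machine u, build the machine
f(p,q) = (π₁ u(p, π₁ u(q,λ)), π₁ u(q,λ)). -/
lemma compMono22_comp (u : SW2 → SW2) (hc : CompMono22 u) :
    ∃ f : SW2 → SW2, CompMono22 f ∧
      (∀ q q' : SW2, SW2.le q q' → SW2.le (u q) (u q')) ∧
      ∀ q : SW2, f q = ((u (q.1, (u (q.2, SW.fin [])).1)).1, (u (q.2, SW.fin [])).1) := by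
  obtain ⟨F, hre, h2, h3⟩ := hc
  have h3' : ∀ q : SW2, IsSupRel SW2.le (emb2 '' secSet F q) (u q) := h3
  have humono : ∀ q q' : SW2, SW2.le q q' → SW2.le (u q) (u q') :=
    fun q q' h => mono_of_sups h3' h
  have heps : ∀ p : S × S, (p, (([], []) : S × S)) ∈ F := fun p => (h2 p).1
  -- the composed function
  set f : SW2 → SW2 :=
    fun q => ((u (q.1, (u (q.2, SW.fin [])).1)).1, (u (q.2, SW.fin [])).1) with hfdef
  -- the composed set
  set Ff : Set ((S × S) × (S × S)) :=
    {z | (∃ t, ((z.1.2, []), (z.2.2, t)) ∈ F) ∧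
      ∃ y' s, y' <+: z.2.2 ∧ ((z.1.1, y'), (z.2.1, s)) ∈ F} with hFfdef
  -- the y-generating set
  have hYsup : ∀ q₂ : SW,
      IsSupRel SW.le
        (SW.fin '' {y : S | ∃ b : S, SW.le (SW.fin b) q₂ ∧ ∃ t, ((b, []), (y, t)) ∈ F})
        (u (q₂, SW.fin [])).1 := by
    intro q₂
    have hproj := sup_fst (h3' (q₂, SW.fin []))
    have hsets : Prod.fst '' secSet F (q₂, SW.fin []) =
        {y : S | ∃ b : S, SW.le (SW.fin b) q₂ ∧ ∃ t, ((b, []), (y, t)) ∈ F} := by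
      ext y
      constructor
      · rintro ⟨⟨y₀, t⟩, ⟨⟨b, c⟩, ⟨hb, hcnil⟩, hF⟩, rfl⟩
        have : c = [] := List.prefix_nil.mp hcnil
        subst this
        exact ⟨b, hb, t, hF⟩
      · rintro ⟨b, hb, t, hF⟩
        exact ⟨(y, t), ⟨(b, []), ⟨hb, List.nil_prefix⟩, hF⟩, rfl⟩
    rwa [hsets] at hproj
  have hYne : ∀ q₂ : SW,
      ([] : S) ∈ {y : S | ∃ b : S, SW.le (SW.fin b) q₂ ∧ ∃ t, ((b, []), (y, t)) ∈ F} :=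
    fun q₂ => ⟨[], SW_le_nil _, [], heps ([], [])⟩
  -- the main sup claim
  have hmain : ∀ q : SW2, IsSupRel SW2.le (emb2 '' secSet Ff q) (f q) := by
    intro q
    constructor
    · -- upper bound
      rintro a ⟨⟨x, y⟩, ⟨⟨a', b'⟩, hp'q, ⟨t, hby⟩, y', s, hy'y, hax⟩, rfl⟩
      have hyw : SW.le (SW.fin y) (u (q.2, SW.fin [])).1 :=
        ((h3' (q.2, SW.fin [])).1 (emb2 (y, t))
          ⟨(y, t), ⟨(b', []), ⟨hp'q.2, List.nil_prefix⟩, hby⟩, rfl⟩).1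
      have hxw : SW.le (SW.fin x) (u (q.1, (u (q.2, SW.fin [])).1)).1 :=
        ((h3' (q.1, (u (q.2, SW.fin [])).1)).1 (emb2 (x, s))
          ⟨(x, s), ⟨(a', y'), ⟨hp'q.1,
            SW_le_trans (show SW.le (SW.fin y') (SW.fin y) from hy'y) hyw⟩, hax⟩, rfl⟩).1
      exact ⟨hxw, hyw⟩
    · -- least
      intro b hb
      have hwb : SW.le (u (q.2, SW.fin [])).1 b.2 := by
        apply (hYsup q.2).2
        rintro a ⟨y, ⟨b', hb'q, t, hF⟩, rfl⟩
        have hmem : ((([], b'), ([], y)) : (S × S) × (S × S)) ∈ Ff :=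
          ⟨⟨t, hF⟩, [], [], List.nil_prefix, heps ([], [])⟩
        exact (hb (emb2 ([], y)) ⟨([], y), ⟨([], b'), ⟨SW_le_nil _, hb'q⟩, hmem⟩, rfl⟩).2
      refine ⟨?_, hwb⟩
      have hXproj := sup_fst (h3' (q.1, (u (q.2, SW.fin [])).1))
      apply hXproj.2
      rintro a ⟨x, ⟨⟨x₀, s⟩, ⟨⟨a', y'⟩, ⟨ha'q, hy'w⟩, hF'⟩, rfl⟩, rfl⟩
      obtain ⟨y, hymem, hy'y⟩ :=
        exists_ge_of_sup (hYsup q.2) ⟨[], hYne q.2⟩ hy'w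
      obtain ⟨b'', hb''q, t, hFy⟩ := hymem
      have hmem : (((a', b''), (x₀, y)) : (S × S) × (S × S)) ∈ Ff :=
        ⟨⟨t, hFy⟩, y', s, hy'y, hF'⟩
      exact (hb (emb2 (x₀, y)) ⟨(x₀, y), ⟨(a', b''), ⟨ha'q, hb''q⟩, hmem⟩, rfl⟩).1
  refine ⟨f, ⟨Ff, ?_, ?_, ?_⟩, humono, fun q => rfl⟩
  · -- RESet Ff
    exact RESet_comp hre
  · -- condition 2
    intro p
    exact ⟨⟨⟨[], heps (p.2, [])⟩, [], [], List.nil_prefix, heps (p.1, [])⟩,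
      f (emb2 p), hmain (emb2 p)⟩
  · exact hmain

end AuxComp
/-- Proposition 1 c: conditional sub-additivity: there is a constant c
such that Km²(x,y) ≤ Km(x|y) + Km(y) + c for all x, y ∈ S∪Ω. -/
theorem conditional_subadditivity (u : SW2 → SW2) (hu : Optimal u) :
    ∃ c : ℕ, ∀ x y : SW,
      Km2 u (x, y) ≤ KmCond u x y + KmCond u y (SW.fin []) + (c : ℕ∞) := by
  obtain ⟨f, hf, humono, hfq⟩ := compMono22_comp u hu.1
  obtain ⟨c, hc⟩ := hu.2 f hf
  refine ⟨c, fun x y => ?_⟩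
  have key : Km2 f (x, y) ≤ KmCond u x y + KmCond u y (SW.fin []) := by
    by_cases hA : KmCond u x y = ⊤
    · rw [hA, top_add]; exact le_top
    by_cases hB : KmCond u y (SW.fin []) = ⊤
    · rw [hB, add_top]; exact le_top
    have hA1 : (⨅ (p : SW) (_ : SW2.le (x, SW.fin []) (u (p, y))), SW.len p) <
        KmCond u x y + 1 :=
      (ENat.lt_add_one_iff hA).mpr le_rfl
    have hB1 : (⨅ (p : SW) (_ : SW2.le (y, SW.fin []) (u (p, SW.fin []))), SW.len p) <
        KmCond u y (SW.fin []) + 1 :=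
      (ENat.lt_add_one_iff hB).mpr le_rfl
    obtain ⟨p, hp⟩ := iInf_lt_iff.mp hA1
    obtain ⟨hpc, hplen⟩ := iInf_lt_iff.mp hp
    obtain ⟨q, hq⟩ := iInf_lt_iff.mp hB1
    obtain ⟨hqc, hqlen⟩ := iInf_lt_iff.mp hq
    have hplen' : SW.len p ≤ KmCond u x y := (ENat.lt_add_one_iff hA).mp hplen
    have hqlen' : SW.len q ≤ KmCond u y (SW.fin []) := (ENat.lt_add_one_iff hB).mp hqlen
    have hxy : SW2.le (x, y) (f (p, q)) := by
      rw [hfq (p, q)]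
      constructor
      · exact SW_le_trans hpc.1 (humono (p, y) (p, (u (q, SW.fin [])).1)
          ⟨SW_le_refl p, hqc.1⟩).1
      · exact hqc.1
    have hle : Km2 f (x, y) ≤ SW2.len (p, q) := by
      unfold Km2
      refine le_trans (iInf_le _ ((p, q) : SW2)) ?_
      exact iInf_le _ hxy
    calc Km2 f (x, y) ≤ SW.len p + SW.len q := hle
      _ ≤ KmCond u x y + KmCond u y (SW.fin []) := add_le_add hplen' hqlen'
  calc Km2 u (x, y) ≤ Km2 f (x, y) + (c : ℕ∞) := hc (x, y)
    _ ≤ KmCond u x y + KmCond u y (SW.fin []) + (c : ℕ∞) := add_le_add_left key _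

end AlgRand
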